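/- Imbrication of structures of the form x ∔ No composes via concatenation: for surreal numbers x, y, the image of y ∔ No under the parametrisation z ↦ x ∔ z equals (x ∔ y) ∔ No. Similarly (x ⨰ No) imbricated with (y ⨰ No) equals (x ⨰ y) ⨰ No, and (x ⨰ No) imbricated with (y ∔ No) equals (x ⨰ y) ∔ (x ⨰ No). -/

import Mathlib

open Ordinal

attribute [local instance] Classical.propDecidable

/-- A surreal number presented as a sign sequence: a map from an ordinal (its
length) to `{-1, +1}`, extended by `0` beyond its length. -/
structure SSurreal : Type 1 where
  length : Ordinal.{0}
  sign : Ordinal → ℤ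
  sign_mem : ∀ α, α < length → sign α = 1 ∨ sign α = -1
  sign_zero : ∀ α, ¬ α < length → sign α = 0

namespace SSurreal

/-- Simplicity: `x ⊑ y`, i.e. `x` is an initial segment of `y`. -/
def sle (x y : SSurreal) : Prop := ∀ α, α < x.length → x.sign α = y.sign α

/-- Strict simplicity `x ⊏ y`. -/
def slt (x y : SSurreal) : Prop := sle x y ∧ x ≠ y

/-- The (lexicographic, Conway) order on sign sequences. -/
def lt (x y : SSurreal) : Prop :=
  ∃ α, (∀ β, β < α → x.sign β = y.sign β) ∧ x.sign α < y.sign α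

/-- The empty sign sequence, i.e. the surreal number `0`. -/
noncomputable def zero : SSurreal :=
  ⟨0, fun _ => 0, fun α h => absurd h (not_lt_of_ge (zero_le (a := α))), fun _ _ => rfl⟩

/-- The ordinal `o` viewed as the constant `+1` sign sequence of length `o`. -/
noncomputable def ofOrdinal (o : Ordinal) : SSurreal :=
  ⟨o, fun α => if α < o then 1 else 0, fun α h => Or.inl (if_pos h), fun α h => if_neg h⟩

/-- The surreal number `1`. -/
noncomputable def one : SSurreal := ofOrdinal 1

/-- The surreal number `-1`. -/
noncomputable def negOne : SSurreal :=
  ⟨1, fun α => if α < 1 then -1 else 0, fun α h => Or.inr (if_pos h), fun α h => if_neg h⟩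

/-- Negation: flip every sign. -/
noncomputable def neg (x : SSurreal) : SSurreal :=
  ⟨x.length, fun α => - x.sign α,
    fun α h => by rcases x.sign_mem α h with h' | h' <;> simp [h'],
    fun α h => by simp [x.sign_zero α h]⟩

/-- Concatenation `x ∔ y` of sign sequences. -/
noncomputable def concat (x y : SSurreal) : SSurreal where
  length := x.length + y.length
  sign α := if α < x.length then x.sign α else y.sign (α - x.length)
  sign_mem := by
    intro α h
    try dsimp only
    by_cases hx : α < x.length
    · rw [if_pos hx]; exact x.sign_mem α hx
    · rw [if_neg hx]
      refine y.sign_mem _ ?_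
      have hle : x.length ≤ α := le_of_not_gt hx
      have := Ordinal.sub_lt_of_le hle (c := y.length)
      exact this.mpr h
  sign_zero := by
    intro α h
    try dsimp only
    have hx : ¬ α < x.length := fun hx =>
      h (hx.trans_le le_self_add)
    rw [if_neg hx]
    refine y.sign_zero _ ?_
    intro hy
    exact h ((Ordinal.sub_lt_of_le (le_of_not_gt hx)).mp hy)

/-- The concatenation product `x ⨰ y` of sign sequences. -/
noncomputable def mul (x y : SSurreal) : SSurreal where
  length := x.length * y.length
  sign γ := if γ < x.length * y.length then y.sign (γ / x.length) * x.sign (γ % x.length) else 0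
  sign_mem := by
    intro γ h
    try dsimp only
    rw [if_pos h]
    have hx0 : x.length ≠ 0 := by
      intro h0; rw [h0, zero_mul] at h; exact (not_lt_of_ge (zero_le (a := γ))) h
    have h1 : γ / x.length < y.length := by
      rwa [Ordinal.div_lt hx0]
    have h2 : γ % x.length < x.length := Ordinal.mod_lt γ hx0
    rcases y.sign_mem _ h1 with hy | hy <;> rcases x.sign_mem _ h2 with hx | hx <;>
      simp [hy, hx]
  sign_zero := fun γ h => if_neg h

/-- `s` is the supremum of `C` with respect to simplicity. -/
def IsSimpSup (C : Set SSurreal) (s : SSurreal) : Prop :=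
  (∀ x ∈ C, sle x s) ∧ ∀ t, (∀ x ∈ C, sle x t) → sle s t

/-- The supremum of a ⊏-chain of sign sequences (their union), when it
exists; junk value `zero` otherwise. -/
noncomputable def chainSup (C : Set SSurreal) : SSurreal :=
  if h : ∃ s, IsSimpSup C s then h.choose else zero

/-- Transfinite concatenation `[α, f] = ∔_{γ<α} f(γ)`. -/
noncomputable def concatSum (α : Ordinal) (f : Ordinal → SSurreal) : SSurreal :=
  Ordinal.limitRecOn α zero (fun β ih => concat ih (f β))
    (fun γ _ ih => chainSup (Set.range fun p : Set.Iio γ => ih p.1 p.2))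

/-- Restriction of `z` to an initial segment of length (at most) `β`. -/
noncomputable def trunc (z : SSurreal) (β : Ordinal) : SSurreal where
  length := min β z.length
  sign α := if α < min β z.length then z.sign α else 0
  sign_mem := fun α h => by
    try dsimp only
    rw [if_pos h]; exact z.sign_mem α (h.trans_le (min_le_right _ _))
  sign_zero := fun α h => if_neg h

/-- The number of `+1` signs occurring in `s` strictly below `γ`. -/
noncomputable def countPlus (s : Ordinal → ℤ) (γ : Ordinal) : Ordinal :=
  Ordinal.limitRecOn γ 0 (fun β ih => if s β = 1 then ih + 1 else ih)
    (fun γ' _ ih => ⨆ β : Set.Iio γ', ih β.1 β.2)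

/-- `τ_u`: the ordinal number of `+1` signs in the sign sequence of `u`. -/
noncomputable def tau (u : SSurreal) : Ordinal := countPlus u.sign u.length

lemma ext' {x y : SSurreal} (h1 : x.length = y.length)
    (h2 : ∀ α, x.sign α = y.sign α) : x = y := by
  cases x; cases y
  simp only [SSurreal.mk.injEq]
  exact ⟨h1, funext h2⟩

lemma concat_assoc (x y z : SSurreal) :
    concat x (concat y z) = concat (concat x y) z := by
  refine ext' (add_assoc _ _ _).symm fun α => ?_
  delta concat; dsimp only
  by_cases h1 : α < x.length
  · rw [if_pos h1, if_pos h1, if_pos (h1.trans_le le_self_add)]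
  · rw [if_neg h1]
    have hle : x.length ≤ α := le_of_not_gt h1
    by_cases h2 : α < x.length + y.length
    · have h3 : α - x.length < y.length := (Ordinal.sub_lt_of_le hle).2 h2
      rw [if_pos h2, if_pos h3, if_neg h1]
    · have h3 : ¬ α - x.length < y.length := fun h =>
        h2 ((Ordinal.sub_lt_of_le hle).1 h)
      rw [if_neg h2, if_neg h3, Ordinal.sub_sub]

lemma mul_assoc' (x y z : SSurreal) :
    mul x (mul y z) = mul (mul x y) z := by
  refine ext' (mul_assoc _ _ _).symm fun γ => ?_
  delta mul; dsimp only
  by_cases h : γ < x.length * (y.length * z.length)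
  · have h' : γ < x.length * y.length * z.length := by rwa [mul_assoc]
    have hx : x.length ≠ 0 := by
      intro h0; rw [h0] at h; simp at h
    have hy : y.length ≠ 0 := by
      intro h0; rw [h0] at h; simp at h
    have hxy : x.length * y.length ≠ 0 := _root_.mul_ne_zero hx hy
    rw [if_pos h, if_pos h']
    set q := γ / (x.length * y.length) with hq
    set r := γ % (x.length * y.length) with hr
    have hrlt : r < x.length * y.length := Ordinal.mod_lt γ hxy
    have hγ : x.length * (y.length * q) + r = γ := by
      rw [← mul_assoc]; exact Ordinal.div_add_mod γ _
    have hdivx : γ / x.length = y.length * q + r / x.length := by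
      rw [← hγ, Ordinal.mul_add_div _ hx]
    have hrx : r / x.length < y.length := (Ordinal.div_lt hx).2 hrlt
    have h1 : γ / x.length < y.length * z.length := (Ordinal.div_lt hx).2 h
    rw [if_pos h1]
    have e1 : γ / x.length / y.length = q := by
      rw [hdivx, Ordinal.mul_add_div _ hy, Ordinal.div_eq_zero_of_lt hrx, add_zero]
    have e2 : γ / x.length % y.length = r / x.length := by
      rw [hdivx, Ordinal.mul_add_mod_self, Ordinal.mod_eq_of_lt hrx]
    have e3 : γ % x.length = r % x.length :=
      (Ordinal.mod_mod_of_dvd γ ⟨y.length, rfl⟩).symm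
    rw [e1, e2, e3]
    rw [if_pos hrlt]
    ring
  · have h' : ¬ γ < x.length * y.length * z.length := by rwa [mul_assoc]
    rw [if_neg h, if_neg h']

lemma mul_concat (x y z : SSurreal) :
    mul x (concat y z) = concat (mul x y) (mul x z) := by
  refine ext' (mul_add _ _ _) fun γ => ?_
  delta mul concat; dsimp only
  by_cases h : γ < x.length * (y.length + z.length)
  · have hx : x.length ≠ 0 := by
      intro h0; rw [h0] at h; simp at h
    rw [if_pos h]
    by_cases h1 : γ < x.length * y.length
    · have h2 : γ / x.length < y.length := (Ordinal.div_lt hx).2 h1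
      rw [if_pos h1, if_pos h2, if_pos h1]
    · have hle : x.length * y.length ≤ γ := le_of_not_gt h1
      have h2 : ¬ γ / x.length < y.length := fun hh => h1 ((Ordinal.div_lt hx).1 hh)
      set δ := γ - x.length * y.length with hδ
      have hγ : x.length * y.length + δ = γ := Ordinal.add_sub_cancel_of_le hle
      have hδlt : δ < x.length * z.length := by
        rw [hδ, Ordinal.sub_lt_of_le hle, ← mul_add]; exact h
      have hdiv : γ / x.length = y.length + δ / x.length := by
        rw [← hγ, Ordinal.mul_add_div _ hx]
      have e1 : γ / x.length - y.length = δ / x.length := by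
        rw [hdiv, Ordinal.add_sub_cancel]
      have e2 : γ % x.length = δ % x.length := by
        rw [← hγ, Ordinal.mul_add_mod_self]
      rw [if_neg h1, if_neg h2, e1, e2, if_pos hδlt]
  · have h' : ¬ γ < x.length * y.length + x.length * z.length := by rwa [← mul_add]
    have h1 : ¬ γ < x.length * y.length := fun hh =>
      h' (hh.trans_le le_self_add)
    have hle : x.length * y.length ≤ γ := le_of_not_gt h1
    have h2 : ¬ γ - x.length * y.length < x.length * z.length := fun hh =>
      h' ((Ordinal.sub_lt_of_le hle).1 hh)
    rw [if_neg h, if_neg h1, if_neg h2]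

end SSurreal

open SSurreal in
/-- imbrication of structures `x ∔ No` and `x ⨰ No`:
`(x ∔ No) ⧸ (y ∔ No) = (x ∔ y) ∔ No`, `(x ⨰ No) ⧸ (y ⨰ No) = (x ⨰ y) ⨰ No`,
and `(x ⨰ No) ⧸ (y ∔ No) = (x ⨰ y) ∔ (x ⨰ No)`. -/
theorem imbrication_of_concat_and_mul_structures (x y : SSurreal) :
    (fun z => concat x z) '' Set.range (fun z => concat y z)
        = Set.range (fun z => concat (concat x y) z) ∧
    (fun z => mul x z) '' Set.range (fun z => mul y z)
        = Set.range (fun z => mul (mul x y) z) ∧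
    (fun z => mul x z) '' Set.range (fun z => concat y z)
        = Set.range (fun z => concat (mul x y) (mul x z)) := by
  refine ⟨?_, ?_, ?_⟩ <;> rw [← Set.range_comp] <;>
    exact congrArg Set.range (funext fun z => by
      simp only [Function.comp_apply]
      first
        | exact concat_assoc x y z
        | exact mul_assoc' x y z
        | exact mul_concat x y z)
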